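/- Let k ≥ 1 and n ≥ 2 be integers, n' = n−1, m' = kn'+1, and m = kn+1. Let P' ∈ D_{m',n'} and let r be the rank of some vertex of P' with r < m' (the rank of the vertex reached after the first j steps of P' is b·m' − a·n', where b and a are the numbers of N and E steps among those j steps). Write P' = A·B as a concatenation, where the vertex of P' between A and B has rank r. Then the word P = N·B·A·E^k (one letter N, followed by B, followed by A, followed by k letters E) is an (m,n)-Dyck path, and area(P) = area(P') + k(n−1) − r. -/

import Mathlib

open scoped Classical

/-- Number of North steps (letters `true`) among the first `i` letters of `w`. -/
def upCount (w : List Bool) (i : ℕ) : ℕ := (w.take i).count true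

/-- Number of East steps (letters `false`) among the first `i` letters of `w`. -/
def rightCount (w : List Bool) (i : ℕ) : ℕ := (w.take i).count false

/-- `w` is an `(m,n)`-Dyck path: a word with `n` North letters (`true`) and `m` East
letters (`false`), each of whose prefixes with `b` North and `a` East letters
satisfies `b*m - a*n ≥ 0`. -/
def IsDyck (m n : ℕ) (w : List Bool) : Prop :=
  w.length = m + n ∧ w.count true = n ∧
  ∀ i, n * rightCount w i ≤ m * upCount w i

/-- The rank of the `(i+1)`-st step (0-indexed `i`) of `w`, namely `b*m - a*n` where
`b` and `a` are the numbers of North and East letters among the first `i` letters. -/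
def rank (m n : ℕ) (w : List Bool) (i : ℕ) : ℤ :=
  (m : ℤ) * upCount w i - (n : ℤ) * rightCount w i

/-- The sweep map: list the steps of `w` in increasing order of their ranks. -/
def sweep (m n : ℕ) (w : List Bool) : List Bool :=
  (((List.range w.length).mergeSort
      (fun i j => decide (rank m n w i ≤ rank m n w j))).map
    (fun i => w.getD i false))

/-- The word `EN(w)`: list the steps of `w` in increasing order of their end ranks
(the end rank of the `(i+1)`-st step is `rank w (i+1)`). -/
def sweepEN (m n : ℕ) (w : List Bool) : List Bool :=
  (((List.range w.length).mergeSort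
      (fun i j => decide (rank m n w (i + 1) ≤ rank m n w (j + 1)))).map
    (fun i => w.getD i false))

/-- One step of the filling algorithm: place entry `p.1` according to letter `p.2`
(`true` = S : start a new column; `false` = W : put it below the smallest active
entry, an active entry being the current bottom entry of a column of height `< k+1`). -/
def fillStep (k : ℕ) (cols : List (List ℕ)) (p : ℕ × Bool) : List (List ℕ) :=
  if p.2 then cols ++ [[p.1]]
  else
    match ((List.range cols.length).filter
        (fun j => (cols.getD j []).length < k + 1)).argmin
        (fun j => (cols.getD j []).getLastD 0) with
    | none => cols
    | some j => cols.set j ((cols.getD j []) ++ [p.1])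

/-- The state (list of columns, each recorded top to bottom) of the filling algorithm
after the entries `1, …, t` have been placed according to the first `t` letters of `w`. -/
def fillColsUpTo (k : ℕ) (w : List Bool) (t : ℕ) : List (List ℕ) :=
  ((List.range t).map (fun i => (i + 1, w.getD i false))).foldl (fillStep k) []

/-- The final state of the filling algorithm on the word `w` (entries
`1, …, m+n-1` placed, i.e. all letters but the last one processed). -/
def fillCols (k : ℕ) (w : List Bool) : List (List ℕ) :=
  fillColsUpTo k w (w.length - 1)

/-- The tableau `T(D)` produced by the filling algorithm, as a function
(row, column) ↦ entry, rows and columns 0-indexed. -/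
def fillTableau (k n : ℕ) (w : List Bool) : Fin (k + 1) → Fin n → ℕ :=
  fun i j => ((fillCols k w).getD j []).getD i 0

/-- `T` fills the `(k+1) × n` array with `1, …, (k+1)n`, increasing along rows and
columns. -/
def IsFilling (k n : ℕ) (T : Fin (k + 1) → Fin n → ℕ) : Prop :=
  (∀ i j, T i j ∈ Finset.Icc 1 ((k + 1) * n)) ∧
  Function.Injective (fun p : Fin (k + 1) × Fin n => T p.1 p.2) ∧
  (∀ i, StrictMono (T i)) ∧
  (∀ j, StrictMono (fun i => T i j))

/-- For all entries `a < b < c < d` of `T` with `d` directly below `a`, the entries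
`b` and `c` do not lie in the same column. -/
def NoBadQuadruple (k n : ℕ) (T : Fin (k + 1) → Fin n → ℕ) : Prop :=
  ∀ (i : Fin (k + 1)) (hi : (i : ℕ) + 1 < k + 1) (j : Fin n)
    (r r' : Fin (k + 1)) (c : Fin n), r < r' →
      ¬ (T i j < T r c ∧ T r c < T r' c ∧ T r' c < T ⟨(i : ℕ) + 1, hi⟩ j)

/-- The family `𝒯ₙᵏ` of tableaux. -/
def IsFussTableau (k n : ℕ) (T : Fin (k + 1) → Fin n → ℕ) : Prop :=
  IsFilling k n T ∧ NoBadQuadruple k n T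

/-- A value `r` is marked for `T` when `r - 1` is a bottom-row entry of `T`. -/
def Marked (k n : ℕ) (T : Fin (k + 1) → Fin n → ℕ) (r : ℕ) : Prop :=
  ∃ j : Fin n, T (Fin.last k) j + 1 = r

/-- One move of the walk `w(T)` on the values `1, …, M` (where `M = m + n`):
from a row-1 entry `x` move to `r + 1` where `r` is the bottom entry of the column
of `x`; from an entry `x` of one of the rows `2, …, k+1` move to the largest
unmarked value `≤ r`, where `r` is the entry directly above `x`; from `x = M`
move to the largest unmarked value `< M`. -/
noncomputable def walkStep (k n M : ℕ) (T : Fin (k + 1) → Fin n → ℕ) (x : ℕ) : ℕ :=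
  if h : ∃ j : Fin n, T 0 j = x then
    T (Fin.last k) (Classical.choose h) + 1
  else if h2 : ∃ p : Fin (k + 1) × Fin n, T p.1 p.2 = x then
    let p := Classical.choose h2
    ((((Finset.Icc 1 M).filter
        (fun y => y ≤ T (⟨(p.1 : ℕ) - 1, lt_of_le_of_lt (Nat.sub_le _ _) p.1.2⟩ : Fin (k + 1)) p.2
          ∧ ¬ Marked k n T y))).max).getD 0
  else
    ((((Finset.Icc 1 M).filter (fun y => y < M ∧ ¬ Marked k n T y))).max).getD 0

/-- The area of the path `w`: the number of lattice cells of the `m × n` rectangle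
lying below the path whose interiors lie entirely above the diagonal.
The cell in column `x` and row `y` (0-indexed) has its interior above the diagonal
iff `n*(x+1) ≤ m*y`, and lies below the path iff the `(y+1)`-st North step of `w`
occurs before the `(x+1)`-st East step. -/
def nthLetterIdx (w : List Bool) (b : Bool) (j : ℕ) : ℕ :=
  (((List.range w.length).filter (fun i => w.getD i false = b))).getD j 0

def area (m n : ℕ) (w : List Bool) : ℕ :=
  ((Finset.range m ×ˢ Finset.range n).filter
    (fun p => n * (p.1 + 1) ≤ m * p.2 ∧
      nthLetterIdx w true p.2 < nthLetterIdx w false p.1)).card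

/-- The reduction `red(T)`: delete column 1 and replace each remaining entry `i` by
`i` minus the number of column-1 entries smaller than `i`. -/
def red (k n : ℕ) (T : Fin (k + 1) → Fin n → ℕ) : Fin (k + 1) → Fin (n - 1) → ℕ :=
  fun i j =>
    let v := T i ⟨(j : ℕ) + 1, by have := j.2; omega⟩
    v - (Finset.univ.filter
      (fun u : Fin (k + 1) => T u ⟨0, by have := j.2; omega⟩ < v)).card

/-- The (finite) set of `(m,n)`-Dyck paths as a `Finset` of words. -/
noncomputable def dyckFinset (m n : ℕ) : Finset (List Bool) :=
  ((Finset.univ : Finset (Fin (m + n) → Bool)).image List.ofFn).filter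
    (fun w => IsDyck m n w)


namespace S18

lemma count_bool (l : List Bool) : l.count true + l.count false = l.length := by
  induction l with
  | nil => simp
  | cons x t ih => cases x <;> simp [List.count_cons] <;> omega

lemma count_take_mono (w : List Bool) (b : Bool) {i j : ℕ} (h : i ≤ j) :
    (w.take i).count b ≤ (w.take j).count b := by
  have : w.take i = (w.take j).take i := by rw [List.take_take, min_eq_left h]
  rw [this]
  exact (List.take_sublist _ _).count_le _

lemma upCount_mono (w : List Bool) {i j : ℕ} (h : i ≤ j) : upCount w i ≤ upCount w j :=
  count_take_mono w true h

lemma rightCount_mono (w : List Bool) {i j : ℕ} (h : i ≤ j) : rightCount w i ≤ rightCount w j :=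
  count_take_mono w false h

lemma count_take_le (w : List Bool) (b : Bool) (i : ℕ) :
    (w.take i).count b ≤ w.count b :=
  (List.take_sublist _ _).count_le _

lemma count_take_succ (w : List Bool) (b : Bool) (i : ℕ) (hi : i < w.length) :
    (w.take (i+1)).count b = (w.take i).count b + (if w.getD i false = b then 1 else 0) := by
  rw [List.take_succ, List.count_append]
  congr 1
  rw [List.getElem?_eq_getElem hi]
  rw [List.getD_eq_getElem _ _ hi]
  by_cases h : w[i] = b <;> simp [h, List.count_singleton']

lemma count_take_eq (w : List Bool) (b : Bool) (i : ℕ) (hi : i ≤ w.length) :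
    (w.take i).count b = ((List.range i).filter (fun j => w.getD j false = b)).length := by
  induction i with
  | zero => simp
  | succ i ih =>
    have hi' : i < w.length := hi
    rw [count_take_succ w b i hi', ih (le_of_lt hi'), List.range_succ, List.filter_append]
    simp only [List.length_append]
    congr 1
    by_cases h : w.getD i false = b <;> simp [List.getD] at h ⊢ <;> simp [h]

lemma filter_range_get (p : ℕ → Bool) (nn : ℕ) :
    ∀ y, y < ((List.range nn).filter p).length →
      p (((List.range nn).filter p).getD y 0) = true ∧
      ((List.range nn).filter p).getD y 0 < nn ∧
      ((List.range (((List.range nn).filter p).getD y 0)).filter p).length = y := by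
  induction nn with
  | zero => intro y hy; simp at hy
  | succ n ih =>
    intro y hy
    rw [List.range_succ, List.filter_append] at hy ⊢
    by_cases hpn : p n
    · simp only [List.filter_cons, hpn, List.filter_nil, if_pos] at hy ⊢
      have hy' : y < ((List.range n).filter p).length + 1 := by simpa using hy
      rcases lt_or_eq_of_le (Nat.lt_succ_iff.mp hy') with h | h
      · have hget : ((List.range n).filter p ++ [n]).getD y 0 = ((List.range n).filter p).getD y 0 := by
          rw [List.getD_eq_getElem _ _ (by simpa using hy), List.getD_eq_getElem _ _ h,
            List.getElem_append_left h]
        rw [hget]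
        obtain ⟨h1, h2, h3⟩ := ih y h
        exact ⟨h1, Nat.lt_succ_of_lt h2, h3⟩
      · have hget : ((List.range n).filter p ++ [n]).getD y 0 = n := by
          rw [List.getD_eq_getElem _ _ (by simpa using hy)]
          rw [List.getElem_append_right (le_of_eq h.symm)]
          simp [h]
        rw [hget]
        exact ⟨hpn, Nat.lt_succ_self n, h.symm⟩
    · simp only [List.filter_cons, hpn, List.filter_nil, if_neg, Bool.false_eq_true,
        not_false_iff, List.append_nil] at hy ⊢
      obtain ⟨h1, h2, h3⟩ := ih y hy
      exact ⟨h1, Nat.lt_succ_of_lt h2, h3⟩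

lemma pos_spec (w : List Bool) (b : Bool) (y : ℕ) (hy : y < w.count b) :
    w.getD (nthLetterIdx w b y) false = b ∧ nthLetterIdx w b y < w.length ∧
      (w.take (nthLetterIdx w b y)).count b = y := by
  simp only [nthLetterIdx]
  have hlen : ((List.range w.length).filter (fun i => decide (w.getD i false = b))).length
      = w.count b := by
    rw [← count_take_eq w b w.length le_rfl, List.take_length]
  have hy' : y < ((List.range w.length).filter (fun i => decide (w.getD i false = b))).length := by
    rw [hlen]; exact hy
  obtain ⟨h1, h2, h3⟩ := filter_range_get (fun i => decide (w.getD i false = b)) w.length y hy'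
  refine ⟨of_decide_eq_true h1, h2, ?_⟩
  rw [count_take_eq w b _ (le_of_lt h2)]
  exact h3

lemma pos_lt_iff (w : List Bool) {x y : ℕ} (hy : y < w.count true) (hx : x < w.count false) :
    nthLetterIdx w true y < nthLetterIdx w false x ↔ rightCount w (nthLetterIdx w true y) ≤ x := by
  obtain ⟨hN1, hN2, _⟩ := pos_spec w true y hy
  obtain ⟨hE1, hE2, hE3⟩ := pos_spec w false x hx
  set i := nthLetterIdx w true y with hidef
  set e := nthLetterIdx w false x with hedef
  have hgi : rightCount w (i+1) = rightCount w i := by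
    rw [rightCount, rightCount, count_take_succ w false i hN2, hN1]; simp
  have hge : rightCount w (e+1) = x + 1 := by
    rw [rightCount, count_take_succ w false e hE2, hE1]
    simp [rightCount] at hE3 ⊢
    exact hE3
  have hgex : rightCount w e = x := hE3
  constructor
  · intro h
    rw [← hgi, ← hgex]
    exact rightCount_mono w h
  · intro h
    rcases lt_trichotomy i e with h' | h' | h'
    · exact h'
    · exfalso; rw [h', hE1] at hN1; exact Bool.noConfusion hN1
    · exfalso
      have : x + 1 ≤ rightCount w i := by rw [← hge]; exact rightCount_mono w h'
      omega

def inv : List Bool → ℕ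
  | [] => 0
  | x :: t => (if x then 0 else t.count true) + inv t

lemma inv_append (X Y : List Bool) :
    inv (X ++ Y) = inv X + inv Y + X.count false * Y.count true := by
  induction X with
  | nil => simp [inv]
  | cons x t ih =>
    cases x <;> simp [inv, ih, List.count_append, List.count_cons] <;> ring

lemma inv_replicate (kk : ℕ) : inv (List.replicate kk false) = 0 := by
  induction kk with
  | zero => simp [inv]
  | succ kk ih => simp [List.replicate_succ, inv, ih, List.count_replicate]

lemma filter_snoc (t : List Bool) (x b : Bool) :
    (List.range (t ++ [x]).length).filter (fun i => (t ++ [x]).getD i false = b) =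
      ((List.range t.length).filter (fun i => t.getD i false = b)) ++
        (if x = b then [t.length] else []) := by
  rw [List.length_append, List.length_singleton, List.range_succ, List.filter_append]
  congr 1
  · apply List.filter_congr
    intro j hj
    rw [List.mem_range] at hj
    rw [List.getD_append _ _ _ _ hj]
  · by_cases h : x = b
    · have : (t ++ [x]).getD t.length false = b := by
        rw [List.getD_eq_getElem _ _ (by simp), List.getElem_append_right le_rfl]
        simpa using h
      simp [this, h]
    · have : ¬ (t ++ [x]).getD t.length false = b := by
        rw [List.getD_eq_getElem _ _ (by simp), List.getElem_append_right le_rfl]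
        simpa using h
      simp [this, h]

lemma nth_snoc (t : List Bool) (x b : Bool) (y : ℕ) (hy : y < t.count b) :
    nthLetterIdx (t ++ [x]) b y = nthLetterIdx t b y := by
  have hlen : ((List.range t.length).filter (fun i => decide (t.getD i false = b))).length
      = t.count b := by rw [← count_take_eq t b t.length le_rfl, List.take_length]
  simp only [nthLetterIdx, filter_snoc]
  rw [List.getD_append _ _ _ _ (by rw [hlen]; exact hy)]

lemma nth_snoc_last (t : List Bool) (b : Bool) :
    nthLetterIdx (t ++ [b]) b (t.count b) = t.length := by
  have hlen : ((List.range t.length).filter (fun i => decide (t.getD i false = b))).length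
      = t.count b := by rw [← count_take_eq t b t.length le_rfl, List.take_length]
  simp only [nthLetterIdx, filter_snoc, if_pos rfl]
  rw [← hlen]
  rw [List.getD_eq_getElem _ _ (by simp), List.getElem_append_right le_rfl]
  simp

lemma rightCount_snoc (t : List Bool) (x : Bool) (i : ℕ) (hi : i ≤ t.length) :
    rightCount (t ++ [x]) i = rightCount t i := by
  rw [rightCount, rightCount, List.take_append_of_le_length hi]

lemma inv_eq (w : List Bool) :
    ∑ y ∈ Finset.range (w.count true), rightCount w (nthLetterIdx w true y) = inv w := by
  induction w using List.reverseRecOn with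
  | nil => simp [inv]
  | append_singleton t x ih =>
    have hposlt : ∀ y < t.count true, nthLetterIdx t true y ≤ t.length := by
      intro y hy
      exact le_of_lt (pos_spec t true y hy).2.1
    cases x with
    | false =>
      have hc : (t ++ [false]).count true = t.count true := by simp
      rw [hc, inv_append]
      have h1 : ∑ y ∈ Finset.range (t.count true),
          rightCount (t ++ [false]) (nthLetterIdx (t ++ [false]) true y) = inv t := by
        rw [← ih]
        apply Finset.sum_congr rfl
        intro y hy
        rw [Finset.mem_range] at hy
        rw [nth_snoc t false true y hy, rightCount_snoc t false _ (hposlt y hy)]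
      rw [h1]
      simp [inv]
    | true =>
      have hc : (t ++ [true]).count true = t.count true + 1 := by simp
      rw [hc, Finset.sum_range_succ, inv_append]
      have h1 : ∑ y ∈ Finset.range (t.count true),
          rightCount (t ++ [true]) (nthLetterIdx (t ++ [true]) true y) = inv t := by
        rw [← ih]
        apply Finset.sum_congr rfl
        intro y hy
        rw [Finset.mem_range] at hy
        rw [nth_snoc t true true y hy, rightCount_snoc t true _ (hposlt y hy)]
      have h2 : rightCount (t ++ [true]) (nthLetterIdx (t ++ [true]) true (t.count true))
          = t.count false := by
        rw [nth_snoc_last t true, rightCount_snoc t true _ le_rfl, rightCount, List.take_length]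
      rw [h1, h2]
      simp [inv]

lemma area_add_inv (m n : ℕ) (hn : 0 < n) (hm : 0 < m) (w : List Bool) (hw : IsDyck m n w) :
    area m n w + inv w = ∑ y ∈ Finset.range n, (m * y / n) := by
  obtain ⟨hlen, hct, hdy⟩ := hw
  have hcf : w.count false = m := by
    have := count_bool w
    omega
  set a : ℕ → ℕ := fun y => rightCount w (nthLetterIdx w true y) with ha
  have haley : ∀ y < n, a y ≤ m * y / n := by
    intro y hy
    have h1 := hdy (nthLetterIdx w true y)
    have h2 : upCount w (nthLetterIdx w true y) = y :=
      (pos_spec w true y (hct ▸ hy)).2.2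
    rw [h2] at h1
    rw [Nat.le_div_iff_mul_le hn, mul_comm]
    exact h1
  have hset : (Finset.range m ×ˢ Finset.range n).filter
      (fun p => n * (p.1 + 1) ≤ m * p.2 ∧
        nthLetterIdx w true p.2 < nthLetterIdx w false p.1) =
      (Finset.range n).biUnion
        (fun y => (Finset.Ico (a y) (m * y / n)).image (fun x => (x, y))) := by
    ext ⟨x, y⟩
    simp only [Finset.mem_filter, Finset.mem_product, Finset.mem_range, Finset.mem_biUnion,
      Finset.mem_image, Finset.mem_Ico, Prod.mk.injEq]
    constructor
    · rintro ⟨⟨hx, hy⟩, hineq, hpos⟩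
      refine ⟨y, hy, x, ⟨?_, ?_⟩, rfl, rfl⟩
      · exact (pos_lt_iff w (hct ▸ hy) (hcf ▸ hx)).mp hpos
      · rw [Nat.lt_iff_add_one_le, Nat.le_div_iff_mul_le hn, mul_comm]
        exact hineq
    · rintro ⟨y', hy', x', ⟨hax, hxd⟩, rfl, rfl⟩
      have hxm : x' < m := by
        have : m * y' / n < m := by
          rw [Nat.div_lt_iff_lt_mul hn]
          exact Nat.mul_lt_mul_of_le_of_lt le_rfl hy' hm
        omega
      refine ⟨⟨hxm, hy'⟩, ?_, ?_⟩
      · rw [Nat.lt_iff_add_one_le, Nat.le_div_iff_mul_le hn, mul_comm] at hxd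
        exact hxd
      · exact (pos_lt_iff w (hct ▸ hy') (hcf ▸ hxm)).mpr hax
  rw [area, hset, Finset.card_biUnion]
  · have hcards : ∀ y ∈ Finset.range n,
        ((Finset.Ico (a y) (m * y / n)).image (fun x => (x, y))).card = m * y / n - a y := by
      intro y _
      rw [Finset.card_image_of_injective _ (fun x₁ x₂ h => (Prod.mk.injEq ..).mp h |>.1),
        Nat.card_Ico]
    rw [Finset.sum_congr rfl hcards]
    have hinv : inv w = ∑ y ∈ Finset.range n, a y := by rw [← inv_eq, hct]
    rw [hinv, ← Finset.sum_add_distrib]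
    apply Finset.sum_congr rfl
    intro y hy
    rw [Finset.mem_range] at hy
    exact Nat.sub_add_cancel (haley y hy)
  · intro y1 h1 y2 h2 hne
    simp only [Finset.disjoint_left, Finset.mem_image, Finset.mem_Ico]
    rintro ⟨px, py⟩ ⟨x1, _, h⟩ ⟨x2, _, h'⟩
    rw [Prod.mk.injEq] at h h'
    exact hne (h.2.trans h'.2.symm)

lemma count_take_append_le (X Y : List Bool) (b : Bool) {s : ℕ} (h : s ≤ X.length) :
    ((X ++ Y).take s).count b = (X.take s).count b := by
  rw [List.take_append_of_le_length h]

lemma count_take_append_add (X Y : List Bool) (b : Bool) (s : ℕ) :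
    ((X ++ Y).take (X.length + s)).count b = X.count b + (Y.take s).count b := by
  rw [List.take_append, List.count_append, List.take_of_length_le (by omega), Nat.add_sub_cancel_left]

lemma count_take_add (w : List Bool) (b : Bool) (j s : ℕ) :
    (w.take (j + s)).count b = (w.take j).count b + ((w.drop j).take s).count b := by
  rw [List.take_add, List.count_append]


lemma ZB (k n' m n uc ac uB aB r : ℤ) (hn' : 1 ≤ n')
    (hnz : n = n' + 1) (hmz : m = k*(n'+1)+1)
    (f3 : n' * (ac + aB) ≤ (k*n'+1) * (uc + uB))
    (f4 : uc + uB ≤ n')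
    (hrz : r = (k*n'+1) * uc - n' * ac)
    (hrle : r ≤ k * n')
    (h0 : 0 ≤ uc) (h3 : 0 ≤ aB) :
    n * aB ≤ m * (uB + 1) := by
  subst hnz hmz hrz
  have hnn : (0:ℤ) ≤ n' + 1 := by linarith
  have key : n' * ((n'+1) * aB) ≤ n' * ((k*(n'+1)+1) * (uB + 1)) := by
    have t1 : (n'+1) * (n' * (ac + aB)) ≤ (n'+1) * ((k*n'+1) * (uc + uB)) :=
      mul_le_mul_of_nonneg_left f3 hnn
    have t2 : (n'+1) * ((k*n'+1) * uc - n' * ac) ≤ (n'+1) * (k * n') :=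
      mul_le_mul_of_nonneg_left hrle hnn
    nlinarith [t1, t2, f4, h0, hn']
  exact le_of_mul_le_mul_left key (by linarith)

lemma ZA (k n' m n uc ac us as bT bF r : ℤ) (hn' : 1 ≤ n')
    (hnz : n = n'+1) (hmz : m = k*(n'+1)+1)
    (f3 : n' * as ≤ (k*n'+1) * us)
    (husc : us ≤ uc)
    (hrz : r = (k*n'+1) * uc - n' * ac)
    (hbT : uc + bT = n') (hbF : ac + bF = k*n'+1)
    (hrle : r ≤ k*n') :
    n * (bF + as) ≤ m * (bT + us + 1) := by
  subst hnz hmz hrz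
  have hnn : (0:ℤ) ≤ n' + 1 := by linarith
  have hbT' : bT = n' - uc := by linarith
  have hbF' : bF = k*n'+1 - ac := by linarith
  subst hbT' hbF'
  have key : n' * ((n'+1) * ((k*n'+1 - ac) + as)) ≤
      n' * ((k*(n'+1)+1) * ((n' - uc) + us + 1)) := by
    have t1 : (n'+1) * (n' * as) ≤ (n'+1) * ((k*n'+1) * us) :=
      mul_le_mul_of_nonneg_left f3 hnn
    have t2 : (n'+1) * ((k*n'+1) * uc - n' * ac) ≤ (n'+1) * (k * n') :=
      mul_le_mul_of_nonneg_left hrle hnn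
    nlinarith [t1, t2, husc, hn']
  exact le_of_mul_le_mul_left key (by linarith)

lemma upCount_append_le (X Y : List Bool) {s : ℕ} (h : s ≤ X.length) :
    upCount (X ++ Y) s = upCount X s := count_take_append_le X Y true h

lemma rightCount_append_le (X Y : List Bool) {s : ℕ} (h : s ≤ X.length) :
    rightCount (X ++ Y) s = rightCount X s := count_take_append_le X Y false h

lemma upCount_append_add (X Y : List Bool) (s : ℕ) :
    upCount (X ++ Y) (X.length + s) = X.count true + upCount Y s :=
  count_take_append_add X Y true s

lemma rightCount_append_add (X Y : List Bool) (s : ℕ) :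
    rightCount (X ++ Y) (X.length + s) = X.count false + rightCount Y s :=
  count_take_append_add X Y false s

end S18

/-- For `k ≥ 1`, `n ≥ 2`, `n' = n-1`, `m' = kn'+1`, `m = kn+1`:
if `P' ∈ 𝒟_{m',n'}` is cut as `P' = A ⬝ B` at a vertex of rank `r < m'`, then
`P = N ⬝ B ⬝ A ⬝ Eᵏ` is an `(m,n)`-Dyck path and
`area(P) = area(P') + k(n-1) - r`. -/
theorem statement18 (k n : ℕ) (hk : 1 ≤ k) (hn : 2 ≤ n)
    (n' m' m : ℕ) (hn' : n' = n - 1) (hm' : m' = k * n' + 1) (hm : m = k * n + 1)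
    (P' : List Bool) (hP' : IsDyck m' n' P')
    (jcut : ℕ) (hjcut : jcut ≤ m' + n')
    (r : ℕ) (hr : (r : ℤ) = rank m' n' P' jcut) (hrm : r < m')
    (A B : List Bool) (hA : A = P'.take jcut) (hB : B = P'.drop jcut)
    (P : List Bool) (hP : P = [true] ++ B ++ A ++ List.replicate k false) :
    IsDyck m n P ∧ area m n P + r = area m' n' P' + k * (n - 1) := by
  obtain ⟨hlen', hct', hdy'⟩ := hP'
  have hn1 : n = n' + 1 := by omega
  have hcf' : P'.count false = m' := by have := S18.count_bool P'; omega
  have hjlen : jcut ≤ P'.length := by omega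
  have hAlen : A.length = jcut := by rw [hA, List.length_take]; omega
  have hAB : A ++ B = P' := by rw [hA, hB]; exact List.take_append_drop _ _
  have hBlen : B.length = m' + n' - jcut := by rw [hB, List.length_drop, hlen']
  obtain ⟨R, hR⟩ : ∃ R : List Bool, R = List.replicate k false := ⟨_, rfl⟩
  obtain ⟨l, hl⟩ : ∃ l : List Bool, l = B ++ (A ++ R) := ⟨_, rfl⟩
  have hPc : P = true :: l := by rw [hP, hl, hR]; simp [List.append_assoc]
  have hRt : R.count true = 0 := by simp [hR, List.count_replicate]
  have hRf : R.count false = k := by simp [hR, List.count_replicate]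
  have hRlen : R.length = k := by simp [hR]
  have hucA : A.count true = upCount P' jcut := by rw [hA]; rfl
  have hacA : A.count false = rightCount P' jcut := by rw [hA]; rfl
  have hsplitT : A.count true + B.count true = n' := by
    rw [← hct', ← hAB, List.count_append]
  have hsplitF : A.count false + B.count false = m' := by
    rw [← hcf', ← hAB, List.count_append]
  have hknn : k * n = k * n' + k := by rw [hn1]; ring
  have hPlen : P.length = m + n := by
    rw [hPc]
    simp only [List.length_cons, hl, List.length_append, hRlen]
    omega
  have hctP : P.count true = n := by
    rw [hPc]
    have h2 : l.count true = B.count true + A.count true := by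
      rw [hl]; simp [List.count_append, hRt]
    simp only [List.count_cons, h2]
    simp
    omega
  have hcfl : l.count false = m := by
    rw [hl]; simp [List.count_append, hRf]; omega
  simp only [rank] at hr
  have hm'z : ((m' : ℤ)) = (k:ℤ) * (n':ℤ) + 1 := by rw [hm']; push_cast; ring
  have hmz : ((m : ℤ)) = (k:ℤ) * ((n':ℤ) + 1) + 1 := by rw [hm, hn1]; push_cast; ring
  have hrle : (r : ℤ) ≤ (k:ℤ) * (n':ℤ) := by
    have : r ≤ k * n' := by omega
    exact_mod_cast this
  have hrz : (r : ℤ) = ((k:ℤ)*(n':ℤ)+1) * (upCount P' jcut) - (n':ℤ) * (rightCount P' jcut) := by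
    rw [hr, hm'z]
  have hup_le : ∀ i, upCount P' i ≤ n' := fun i => hct' ▸ S18.count_take_le P' true i
  -- the Dyck inequality for P
  have hdyP : ∀ i, n * rightCount P i ≤ m * upCount P i := by
    intro i
    cases i with
    | zero => simp [upCount, rightCount]
    | succ s =>
      have hup : upCount P (s+1) = upCount l s + 1 := by
        rw [hPc, upCount, upCount, List.take_succ_cons, List.count_cons]
        simp
      have hrt : rightCount P (s+1) = rightCount l s := by
        rw [hPc, rightCount, rightCount, List.take_succ_cons, List.count_cons]
        simp
      rw [hup, hrt]
      rcases le_or_gt s B.length with hsb | hsb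
      · -- B region
        have hu : upCount l s = upCount B s := by
          rw [hl]; exact S18.upCount_append_le _ _ hsb
        have hv : rightCount l s = rightCount B s := by
          rw [hl]; exact S18.rightCount_append_le _ _ hsb
        rw [hu, hv]
        have hBup : upCount P' (jcut + s) = upCount P' jcut + upCount B s := by
          rw [upCount, S18.count_take_add P' true jcut s, ← hB]; rfl
        have hBright : rightCount P' (jcut + s) = rightCount P' jcut + rightCount B s := by
          rw [rightCount, S18.count_take_add P' false jcut s, ← hB]; rfl
        have f3 := hdy' (jcut + s)
        rw [hBup, hBright, hm'] at f3
        have f4 := hup_le (jcut + s)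
        rw [hBup] at f4
        zify
        refine S18.ZB k n' m n (upCount P' jcut) (rightCount P' jcut)
          (upCount B s) (rightCount B s) r (by omega) (by omega) hmz
          (by exact_mod_cast f3) (by exact_mod_cast f4) hrz hrle
          (by positivity) (by positivity)
      · -- A and E regions
        obtain ⟨t, rfl⟩ : ∃ t, s = B.length + t := ⟨s - B.length, by omega⟩
        have hu : upCount l (B.length + t) = B.count true + upCount (A ++ R) t := by
          rw [hl]; exact S18.upCount_append_add _ _ t
        have hv : rightCount l (B.length + t) = B.count false + rightCount (A ++ R) t := by
          rw [hl]; exact S18.rightCount_append_add _ _ t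
        rcases le_or_gt t A.length with hta | hta
        · -- A region
          have hu2 : upCount (A ++ R) t = upCount P' t := by
            rw [S18.upCount_append_le _ _ hta, upCount, upCount, hA, List.take_take,
              min_eq_left (by omega : t ≤ jcut)]
          have hv2 : rightCount (A ++ R) t = rightCount P' t := by
            rw [S18.rightCount_append_le _ _ hta, rightCount, rightCount, hA, List.take_take,
              min_eq_left (by omega : t ≤ jcut)]
          rw [hu, hv, hu2, hv2]
          have f3 := hdy' t
          rw [hm'] at f3
          have husc : upCount P' t ≤ upCount P' jcut :=
            S18.upCount_mono P' (by omega : t ≤ jcut)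
          have hbT : upCount P' jcut + B.count true = n' := by omega
          have hbF : rightCount P' jcut + B.count false = k * n' + 1 := by omega
          zify
          have := S18.ZA k n' m n (upCount P' jcut) (rightCount P' jcut)
            (upCount P' t) (rightCount P' t) (B.count true) (B.count false) r
            (by omega) (by omega) hmz (by exact_mod_cast f3) (by exact_mod_cast husc)
            hrz (by exact_mod_cast hbT) (by exact_mod_cast hbF) hrle
          linarith
        · -- E region
          have h5 : upCount l (B.length + A.length) = B.count true + A.count true := by
            rw [hl, S18.upCount_append_add, S18.upCount_append_le A R le_rfl,
              upCount, List.take_length]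
          have h7 : n ≤ upCount l (B.length + t) + 1 := by
            have := S18.upCount_mono l (by omega : B.length + A.length ≤ B.length + t)
            omega
          have h8 : rightCount l (B.length + t) ≤ m := hcfl ▸ S18.count_take_le l false _
          calc n * rightCount l (B.length + t) ≤ n * m := Nat.mul_le_mul_left n h8
            _ = m * n := Nat.mul_comm n m
            _ ≤ m * (upCount l (B.length + t) + 1) := Nat.mul_le_mul_left m h7
  have hdyckP : IsDyck m n P := ⟨hPlen, hctP, hdyP⟩
  refine ⟨hdyckP, ?_⟩
  -- area identity
  have e1 : S18.inv P = S18.inv B + S18.inv A + B.count false * A.count true := by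
    have h0 : S18.inv (true :: l) = S18.inv l := by simp [S18.inv]
    rw [hPc, h0, hl, S18.inv_append, S18.inv_append, hR, S18.inv_replicate,
      List.count_append]
    simp [List.count_replicate]
  have e2 : S18.inv P' = S18.inv A + S18.inv B + A.count false * B.count true := by
    rw [← hAB, S18.inv_append]
  have key : B.count false * A.count true = A.count false * B.count true + r := by
    have c1 : ((A.count true : ℤ)) + B.count true = n' := by exact_mod_cast hsplitT
    have c2 : ((A.count false : ℤ)) + B.count false = m' := by exact_mod_cast hsplitF
    have hr2 : (r:ℤ) = (m':ℤ) * (A.count true) - (n':ℤ) * (A.count false) := by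
      rw [hucA, hacA]; exact hr
    have h1 : (B.count false : ℤ) * A.count true = (A.count false : ℤ) * B.count true + r := by
      linear_combination (A.count true : ℤ) * c2 - (A.count false : ℤ) * c1 - hr2
    exact_mod_cast h1
  have hinvP : S18.inv P = S18.inv P' + r := by omega
  have hsum1 : ∑ y ∈ Finset.range n, (m * y / n) = ∑ y ∈ Finset.range n, k * y := by
    apply Finset.sum_congr rfl
    intro y hy
    rw [Finset.mem_range] at hy
    rw [hm]
    have hmy : (k*n+1) * y = y + (k*y) * n := by ring
    rw [hmy, Nat.add_mul_div_right _ _ (by omega : 0 < n), Nat.div_eq_of_lt hy]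
    omega
  have hsum2 : ∑ y ∈ Finset.range n', (m' * y / n') = ∑ y ∈ Finset.range n', k * y := by
    apply Finset.sum_congr rfl
    intro y hy
    rw [Finset.mem_range] at hy
    rw [hm']
    have hmy : (k*n'+1) * y = y + (k*y) * n' := by ring
    rw [hmy, Nat.add_mul_div_right _ _ (by omega : 0 < n'), Nat.div_eq_of_lt hy]
    omega
  have hS : ∑ y ∈ Finset.range n, k*y = (∑ y ∈ Finset.range n', k*y) + k*n' := by
    rw [hn1, Finset.sum_range_succ]
  have hA1 := S18.area_add_inv m n (by omega) (by omega) P hdyckP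
  have hA2 := S18.area_add_inv m' n' (by omega) (by omega) P' ⟨hlen', hct', hdy'⟩
  rw [hsum1] at hA1
  rw [hsum2] at hA2
  have hkn' : k * (n-1) = k * n' := by rw [hn']
  omega
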